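/- Let n and m be coprime positive integers and let a be a positive integer. Let P ∈ ℂ[x, y] be a polynomial that is monic in y of degree a·n and quasi-homogeneous of weighted degree a·n·m for the weights w(x) = n, w(y) = m, i.e. every monomial x^i·y^j occurring in P with nonzero coefficient satisfies n·i + m·j = a·n·m. Then there exist pairwise distinct complex numbers C_1, …, C_s and positive integers k_1, …, k_s with k_1 + ⋯ + k_s = a such that P = ∏_{j=1}^{s} (y^n − C_j·x^m)^{k_j}. -/

import Mathlib

open Polynomial

/-- Quasi-homogeneity predicate. -/
def QHaux (n m d : ℕ) (p : Polynomial (Polynomial ℂ)) : Prop :=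
  ∀ i j : ℕ, (p.coeff j).coeff i ≠ 0 → n * i + m * j = d

lemma QHaux.one (n m : ℕ) : QHaux n m 0 1 := by
  intro i j h
  by_cases hj : j = 0
  · subst hj
    simp only [coeff_one, if_pos rfl] at h
    by_cases hi : i = 0
    · subst hi; simp
    · simp [Polynomial.coeff_one, hi] at h
  · simp [coeff_one, hj] at h

lemma QHaux.mul {n m d₁ d₂ : ℕ} {p q : Polynomial (Polynomial ℂ)}
    (hp : QHaux n m d₁ p) (hq : QHaux n m d₂ q) : QHaux n m (d₁ + d₂) (p * q) := by
  intro i j h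
  rw [coeff_mul, finset_sum_coeff] at h
  obtain ⟨x, hx, hxne⟩ := Finset.exists_ne_zero_of_sum_ne_zero h
  rw [coeff_mul] at hxne
  obtain ⟨y, hy, hyne⟩ := Finset.exists_ne_zero_of_sum_ne_zero hxne
  have h1 := hp y.1 x.1 (left_ne_zero_of_mul hyne)
  have h2 := hq y.2 x.2 (right_ne_zero_of_mul hyne)
  have hxsum : x.1 + x.2 = j := Finset.HasAntidiagonal.mem_antidiagonal.mp hx
  have hysum : y.1 + y.2 = i := Finset.HasAntidiagonal.mem_antidiagonal.mp hy
  calc n * i + m * j = (n * y.1 + m * x.1) + (n * y.2 + m * x.2) := by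
        rw [← hxsum, ← hysum]; ring
    _ = d₁ + d₂ := by rw [h1, h2]

lemma QHaux.pow {n m d : ℕ} {p : Polynomial (Polynomial ℂ)}
    (hp : QHaux n m d p) (k : ℕ) : QHaux n m (d * k) (p ^ k) := by
  induction k with
  | zero => simpa using QHaux.one n m
  | succ k ih =>
      have hd : d * (k + 1) = d * k + d := by ring
      rw [pow_succ, hd]
      exact ih.mul hp

lemma QHaux.prod {n m : ℕ} {α : Type*} (t : Finset α) (d : α → ℕ)
    (f : α → Polynomial (Polynomial ℂ)) (h : ∀ x ∈ t, QHaux n m (d x) (f x)) :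
    QHaux n m (∑ x ∈ t, d x) (∏ x ∈ t, f x) := by
  classical
  induction t using Finset.cons_induction with
  | empty => simpa using QHaux.one n m
  | cons x t hx ih =>
      rw [Finset.prod_cons, Finset.sum_cons]
      exact (h x (Finset.mem_cons_self x t)).mul (ih fun y hy => h y (Finset.mem_cons_of_mem hy))

lemma QHaux.factor {n m : ℕ} (hn : 0 < n) (c : ℂ) :
    QHaux n m (n * m) (X ^ n - C (C c * X ^ m)) := by
  intro i j h
  rw [coeff_sub, coeff_X_pow, coeff_C] at h
  by_cases hj : j = n
  · rw [if_pos hj, if_neg (by omega : ¬ j = 0), sub_zero] at h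
    have hi : i = 0 := by
      by_contra hi
      simp [Polynomial.coeff_one, hi] at h
    rw [hi, hj]; ring
  · by_cases hj0 : j = 0
    · rw [if_neg hj, if_pos hj0, zero_sub, coeff_neg, neg_ne_zero,
        coeff_C_mul, coeff_X_pow] at h
      have hi : i = m := by
        by_contra hi
        simp [hi] at h
      rw [hi, hj0]; ring
    · rw [if_neg hj, if_neg hj0, sub_zero] at h
      simp at h

lemma qh_coeff_eq {n m d : ℕ} (hn : 0 < n) {p : Polynomial (Polynomial ℂ)}
    (hp : QHaux n m d p) (i j : ℕ) :
    (p.coeff j).coeff i = if n * i + m * j = d then (p.coeff j).eval 1 else 0 := by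
  split_ifs with hcond
  · set q := p.coeff j with hq
    have heval : q.eval 1 = ∑ i' ∈ q.support, q.coeff i' := by
      rw [eval_eq_sum, Polynomial.sum_def]
      simp
    have hsub : q.support ⊆ {i} := by
      intro i' hi'
      have h := hp i' j (mem_support_iff.mp hi')
      have : n * i' = n * i := by omega
      simp [Nat.eq_of_mul_eq_mul_left hn this]
    rw [heval, Finset.sum_subset hsub fun x _ hnx => notMem_support_iff.mp hnx,
      Finset.sum_singleton]
  · by_contra h
    exact hcond (hp i j h)

/-- Let `n`, `m` be coprime positive integers and `a` a positive integer.
Let `P ∈ ℂ[x][y]` be monic in `y` of degree `a·n` and quasi-homogeneous of weighted degree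
`a·n·m` for the weights `w(x) = n`, `w(y) = m`. Then
`P = ∏_{j=1}^{s} (y^n − C_j·x^m)^{k_j}` for pairwise distinct complex numbers `C_j` and
positive integers `k_j` with `k_1 + ⋯ + k_s = a`. -/
theorem quasi_homogeneous_factorization
    (n m a : ℕ) (hn : 0 < n) (hm : 0 < m) (ha : 0 < a)
    (hcop : Nat.Coprime n m)
    (P : Polynomial (Polynomial ℂ))
    (hmonic : P.Monic) (hdeg : P.natDegree = a * n)
    (hqh : ∀ i j : ℕ, (P.coeff j).coeff i ≠ 0 → n * i + m * j = a * n * m) :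
    ∃ (s : ℕ) (C : Fin s → ℂ) (k : Fin s → ℕ),
      Function.Injective C ∧ (∀ j, 0 < k j) ∧ (∑ j, k j) = a ∧
      P = ∏ j, (Polynomial.X ^ n -
        Polynomial.C (Polynomial.C (C j) * Polynomial.X ^ m)) ^ k j := by
  classical
  set φ : Polynomial ℂ →+* ℂ := Polynomial.evalRingHom 1 with hφ
  set Q : Polynomial ℂ := P.map φ with hQ
  have hQcoeff : ∀ j, Q.coeff j = (P.coeff j).eval 1 := fun j => coeff_map φ j
  have hQmonic : Q.Monic := hmonic.map φ
  have hQdeg : Q.natDegree = a * n := by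
    rw [hQ, hmonic.natDegree_map, hdeg]
  -- coefficients of Q vanish off multiples of n
  have hQ0 : ∀ j, ¬ n ∣ j → Q.coeff j = 0 := by
    intro j hj
    by_contra h
    rw [hQcoeff] at h
    have hP : P.coeff j ≠ 0 := fun h0 => h (by rw [h0]; simp)
    have hex : ∃ i, (P.coeff j).coeff i ≠ 0 := by
      by_contra hno
      push_neg at hno
      exact hP (Polynomial.ext hno)
    obtain ⟨i, hi⟩ := hex
    have heq := hqh i j hi
    have h1 : n ∣ n * i + m * j := by rw [heq]; exact ⟨a * m, by ring⟩
    have h2 : n ∣ m * j := (Nat.dvd_add_right (dvd_mul_right n i)).mp h1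
    exact hj (hcop.dvd_of_dvd_mul_left h2)
  set R : Polynomial ℂ := Q.contract n with hR
  have hexp : Polynomial.expand ℂ n R = Q := by
    ext j
    rw [coeff_expand hn]
    split_ifs with h
    · rw [hR, coeff_contract hn.ne', Nat.div_mul_cancel h]
    · exact (hQ0 j h).symm
  have hRdeg : R.natDegree = a := by
    have h := natDegree_expand n R
    rw [hexp, hQdeg] at h
    exact (Nat.eq_of_mul_eq_mul_right hn h.symm)
  have hRmonic : R.Monic := by
    have : R.coeff a = Q.coeff (a * n) := by rw [hR, coeff_contract hn.ne']
    unfold Polynomial.Monic Polynomial.leadingCoeff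
    rw [hRdeg, this, ← hQdeg]
    exact hQmonic
  -- factor R
  have hsplit : R = (R.roots.map fun r => X - Polynomial.C r).prod :=
    (IsAlgClosed.splits R).eq_prod_roots_of_monic hRmonic
  set t : Finset ℂ := R.roots.toFinset with ht
  have hRprod : R = ∏ r ∈ t, (X - Polynomial.C r) ^ R.roots.count r := by
    rw [← Finset.prod_multiset_map_count]
    exact hsplit
  have hcard : R.roots.card = a := by
    rw [← hRdeg]
    exact (Polynomial.splits_iff_card_roots.mp (IsAlgClosed.splits R))
  have hsum : ∑ r ∈ t, R.roots.count r = a := by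
    rw [ht, Multiset.toFinset_sum_count_eq, hcard]
  -- enumerate
  set s : ℕ := t.card with hs
  set e : t ≃ Fin s := t.equivFin with he
  refine ⟨s, fun j => ((e.symm j : t) : ℂ), fun j => R.roots.count ((e.symm j : t) : ℂ),
    ?_, ?_, ?_, ?_⟩
  · intro j₁ j₂ h
    exact e.symm.injective (Subtype.ext h)
  · intro j
    exact Multiset.count_pos.mpr (Multiset.mem_toFinset.mp (e.symm j).2)
  · rw [← hsum, ← Finset.sum_coe_sort t (fun x => R.roots.count x)]
    exact Equiv.sum_comp e.symm (fun x : t => R.roots.count (x : ℂ))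
  · -- the main identity
    set P' : Polynomial (Polynomial ℂ) :=
      ∏ j, (X ^ n - Polynomial.C (Polynomial.C (((e.symm j : t) : ℂ)) * X ^ m)) ^
        R.roots.count ((e.symm j : t) : ℂ) with hP'
    show P = P'
    have hreindex : ∀ (f : ℂ → Polynomial (Polynomial ℂ)),
        (∏ j, f ((e.symm j : t) : ℂ)) = ∏ r ∈ t, f r := by
      intro f
      rw [Equiv.prod_comp e.symm (fun x : t => f (x : ℂ))]
      exact Finset.prod_coe_sort t f
    -- P' is quasi-homogeneous
    have hqh' : QHaux n m (a * n * m) P' := by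
      have h1 : QHaux n m (∑ r ∈ t, n * m * R.roots.count r)
          (∏ r ∈ t, (X ^ n - Polynomial.C (Polynomial.C r * X ^ m)) ^ R.roots.count r) :=
        QHaux.prod t _ _ (fun r _ => (QHaux.factor hn r).pow _)
      have h2 : (∑ r ∈ t, n * m * R.roots.count r) = a * n * m := by
        rw [← Finset.mul_sum, hsum]; ring
      rw [hP', hreindex (fun r => (X ^ n - Polynomial.C (Polynomial.C r * X ^ m)) ^
        R.roots.count r), ← h2]
      exact h1
    -- P' maps to Q under φ
    have hmap : P'.map φ = Q := by
      have : P'.map φ = ∏ r ∈ t, (X ^ n - Polynomial.C r) ^ R.roots.count r := by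
        rw [hP', hreindex (fun r => (X ^ n - Polynomial.C (Polynomial.C r * X ^ m)) ^
          R.roots.count r)]
        rw [Polynomial.map_prod]
        refine Finset.prod_congr rfl fun r _ => ?_
        rw [Polynomial.map_pow, Polynomial.map_sub, Polynomial.map_pow, Polynomial.map_X,
          Polynomial.map_C]
        simp [hφ]
      have hexp2 : Polynomial.expand ℂ n R =
          ∏ r ∈ t, (X ^ n - Polynomial.C r) ^ R.roots.count r := by
        conv_lhs => rw [hRprod]
        rw [map_prod]
        refine Finset.prod_congr rfl fun r _ => ?_
        rw [map_pow, map_sub, Polynomial.expand_X, Polynomial.expand_C]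
      rw [this, ← hexp2, hexp]
    -- conclude by comparing coefficients
    refine Polynomial.ext fun j => Polynomial.ext fun i => ?_
    rw [qh_coeff_eq hn hqh i j, qh_coeff_eq hn hqh' i j]
    have : (P.coeff j).eval 1 = (P'.coeff j).eval 1 := by
      have h1 : (P.map φ).coeff j = (P'.map φ).coeff j := by rw [← hQ, hmap]
      rwa [coeff_map, coeff_map] at h1
    rw [this]
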